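/- arXiv:1812.02198 — 6 statements merged into one kernel-verified Lean document; each statement's English description precedes it below -/
import Mathlib

section
/- Let f be a C² function without critical points on a domain Ω ⊆ ℝ², with N = ∇f/‖∇f‖ and κ the signed curvature of its level curves (with respect to N). Then f is harmonic on Ω if and only if κ(p) · D_N f(p) = D²_N f(p) for every p ∈ Ω. -/
open scoped InnerProductSpace

/-- The Hessian quadratic form of `f` at `p` evaluated at `(v, v)`
(the second directional derivative of `f` at `p` along `v`). -/
noncomputable def hessQF {n : ℕ} (f : EuclideanSpace ℝ (Fin n) → ℝ)
    (p v : EuclideanSpace ℝ (Fin n)) : ℝ :=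
  ⟪fderiv ℝ (gradient f) p v, v⟫_ℝ

/-- The Laplacian of `f` at `p`. -/
noncomputable def lap {n : ℕ} (f : EuclideanSpace ℝ (Fin n) → ℝ)
    (p : EuclideanSpace ℝ (Fin n)) : ℝ :=
  ∑ i : Fin n,
    ⟪fderiv ℝ (gradient f) p (EuclideanSpace.single i 1), EuclideanSpace.single i (1:ℝ)⟫_ℝ

open InnerProductSpace Topology

lemma inner_two (x y : EuclideanSpace ℝ (Fin 2)) :
    ⟪x, y⟫_ℝ = x 0 * y 0 + x 1 * y 1 := by
  simp [PiLp.inner_apply, RCLike.inner_apply, Fin.sum_univ_two]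
  ring

lemma decomp2 (v : EuclideanSpace ℝ (Fin 2)) :
    v = v 0 • EuclideanSpace.single 0 (1:ℝ) + v 1 • EuclideanSpace.single 1 (1:ℝ) := by
  refine PiLp.ext fun i => ?_
  fin_cases i <;>
    simp [EuclideanSpace.single_apply]

lemma key_identity {Ω : Set (EuclideanSpace ℝ (Fin 2))} (hΩ : IsOpen Ω)
    (f : EuclideanSpace ℝ (Fin 2) → ℝ) (hf : ContDiffOn ℝ 2 f Ω)
    (hgrad : ∀ p ∈ Ω, gradient f p ≠ 0)
    (N : EuclideanSpace ℝ (Fin 2) → EuclideanSpace ℝ (Fin 2))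
    (hN : ∀ p ∈ Ω, N p = ‖gradient f p‖⁻¹ • gradient f p)
    (κ : EuclideanSpace ℝ (Fin 2) → ℝ)
    (hκ : ∀ p ∈ Ω, ∃ γ : ℝ → EuclideanSpace ℝ (Fin 2),
      ContDiff ℝ 2 γ ∧ γ 0 = p ∧
      (∀ᶠ s in nhds 0, f (γ s) = f p) ∧
      (∀ᶠ s in nhds 0, ‖deriv γ s‖ = 1) ∧
      (deriv γ 0) 0 = (N p) 1 ∧ (deriv γ 0) 1 = -((N p) 0) ∧
      deriv (deriv γ) 0 = κ p • N p)
    (p : EuclideanSpace ℝ (Fin 2)) (hp : p ∈ Ω) :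
    lap f p = hessQF f p (N p) - κ p * ‖gradient f p‖ := by
  obtain ⟨γ, hγ, hγ0, hconst, -, hT0, hT1, hγ''⟩ := hκ p hp
  set G := gradient f with hG
  -- differentiability of the gradient at p
  have hf2 : ContDiffAt ℝ 2 f p := hf.contDiffAt (hΩ.mem_nhds hp)
  have hfd1 : ContDiffAt ℝ 1 (fderiv ℝ f) p := hf2.fderiv_right (by norm_num)
  have hGdiff : DifferentiableAt ℝ G p := by
    have hL : DifferentiableAt ℝ
        (fun D : StrongDual ℝ (EuclideanSpace ℝ (Fin 2)) =>
          (toDual ℝ (EuclideanSpace ℝ (Fin 2))).symm D) (fderiv ℝ f p) :=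
      (toDual ℝ (EuclideanSpace ℝ (Fin 2))).symm.differentiableAt
    exact hL.comp p (hfd1.differentiableAt one_ne_zero)
  have hγdiff : Differentiable ℝ γ := hγ.differentiable (by norm_num)
  -- the tangential derivative of f along the level curve vanishes
  have hmem : ∀ᶠ s in 𝓝 (0:ℝ), γ s ∈ Ω := by
    apply hγ.continuous.continuousAt.preimage_mem_nhds
    rw [hγ0]; exact hΩ.mem_nhds hp
  have hloc : ∀ᶠ s in 𝓝 (0:ℝ), ∀ᶠ t in 𝓝 s, f (γ t) = f p := hconst.eventually_nhds
  have hzero : ∀ᶠ s in 𝓝 (0:ℝ), ⟪G (γ s), deriv γ s⟫_ℝ = (0:ℝ) := by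
    filter_upwards [hmem, hloc] with s hsΩ hsc
    have hdf : DifferentiableAt ℝ f (γ s) :=
      (hf.contDiffAt (hΩ.mem_nhds hsΩ)).differentiableAt (by norm_num)
    have hdγ : HasDerivAt γ (deriv γ s) s := (hγdiff s).hasDerivAt
    have h1 : HasDerivAt (f ∘ γ) (fderiv ℝ f (γ s) (deriv γ s)) s :=
      hdf.hasFDerivAt.comp_hasDerivAt s hdγ
    have h2 : HasDerivAt (f ∘ γ) 0 s := by
      have he : (f ∘ γ) =ᶠ[𝓝 s] fun _ => f p := hsc
      rw [he.hasDerivAt_iff]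
      exact hasDerivAt_const s (f p)
    have h3 : fderiv ℝ f (γ s) (deriv γ s) = 0 := h1.unique h2
    calc ⟪G (γ s), deriv γ s⟫_ℝ = fderiv ℝ f (γ s) (deriv γ s) := toDual_symm_apply
    _ = 0 := h3
  -- second derivative of f along the curve
  have hdγ0 : HasDerivAt γ (deriv γ 0) 0 := (hγdiff 0).hasDerivAt
  have hAp : HasFDerivAt G (fderiv ℝ G p) (γ 0) := by
    rw [hγ0]; exact hGdiff.hasFDerivAt
  have hGγ : HasDerivAt (fun s => G (γ s)) (fderiv ℝ G p (deriv γ 0)) 0 :=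
    hAp.comp_hasDerivAt 0 hdγ0
  have hdd : HasDerivAt (deriv γ) (deriv (deriv γ) 0) 0 := by
    have h11 : ContDiff ℝ ((1:WithTop ℕ∞) + 1) γ := by
      have : ((1:WithTop ℕ∞) + 1) = 2 := by norm_num
      rw [this]; exact hγ
    have hd1 : ContDiff ℝ 1 (deriv γ) := (contDiff_succ_iff_deriv.mp h11).2.2
    exact ((hd1.differentiable one_ne_zero) 0).hasDerivAt
  have hinner : HasDerivAt (fun s => ⟪G (γ s), deriv γ s⟫_ℝ)
      (⟪G (γ 0), deriv (deriv γ) 0⟫_ℝ + ⟪fderiv ℝ G p (deriv γ 0), deriv γ 0⟫_ℝ) 0 :=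
    HasDerivAt.inner ℝ hGγ hdd
  have hd0 : deriv (fun s => ⟪G (γ s), deriv γ s⟫_ℝ) 0 = 0 := by
    have he : (fun s => ⟪G (γ s), deriv γ s⟫_ℝ) =ᶠ[𝓝 (0:ℝ)] fun _ => (0:ℝ) := hzero
    rw [he.deriv_eq]; simp
  have main0 : ⟪G (γ 0), deriv (deriv γ) 0⟫_ℝ
      + ⟪fderiv ℝ G p (deriv γ 0), deriv γ 0⟫_ℝ = 0 := by
    rw [← hinner.deriv]; exact hd0
  rw [hγ0] at main0
  have hne : ‖G p‖ ≠ 0 := norm_ne_zero_iff.mpr (hgrad p hp)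
  have hgn : ⟪G p, deriv (deriv γ) 0⟫_ℝ = κ p * ‖G p‖ := by
    rw [hγ'', real_inner_smul_right, hN p hp, real_inner_smul_right,
      real_inner_self_eq_norm_mul_norm]
    field_simp
  -- expand into coordinates
  set A := fderiv ℝ G p with hA
  set a := A (EuclideanSpace.single 0 (1:ℝ)) with ha
  set b := A (EuclideanSpace.single 1 (1:ℝ)) with hb
  have happly : ∀ v : EuclideanSpace ℝ (Fin 2), A v = v 0 • a + v 1 • b := by
    intro v
    conv_lhs => rw [decomp2 v]
    rw [map_add, map_smul, map_smul]
  have hQ : ∀ v : EuclideanSpace ℝ (Fin 2),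
      ⟪A v, v⟫_ℝ = (v 0 * a 0 + v 1 * b 0) * v 0 + (v 0 * a 1 + v 1 * b 1) * v 1 := by
    intro v
    rw [inner_two, happly v]
    simp only [PiLp.add_apply, PiLp.smul_apply, smul_eq_mul]
  have hNunit : (N p) 0 * (N p) 0 + (N p) 1 * (N p) 1 = 1 := by
    have h1 : ‖N p‖ = 1 := by
      rw [hN p hp, norm_smul, norm_inv, norm_norm]
      field_simp
    have h2 := inner_two (N p) (N p)
    rw [real_inner_self_eq_norm_mul_norm, h1] at h2
    linarith
  have hlap : lap f p = a 0 + b 1 := by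
    simp only [lap, Fin.sum_univ_two, ← hG, ← hA, ← ha, ← hb, inner_two,
      EuclideanSpace.single_apply]
    norm_num
  have hhess : hessQF f p (N p) = ⟪A (N p), N p⟫_ℝ := by
    simp only [hessQF, ← hG, ← hA]
  have hQT := hQ (deriv γ 0)
  rw [hT0, hT1] at hQT
  have hAT : ⟪A (deriv γ 0), deriv γ 0⟫_ℝ = -(κ p * ‖G p‖) := by
    rw [hgn] at main0; linarith
  rw [hQT] at hAT
  rw [hlap, hhess, hQ (N p)]
  linear_combination hAT - (a 0 + b 1) * hNunit

theorem stmt2 {Ω : Set (EuclideanSpace ℝ (Fin 2))} (hΩ : IsOpen Ω)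
    (f : EuclideanSpace ℝ (Fin 2) → ℝ) (hf : ContDiffOn ℝ 2 f Ω)
    (hgrad : ∀ p ∈ Ω, gradient f p ≠ 0)
    (N : EuclideanSpace ℝ (Fin 2) → EuclideanSpace ℝ (Fin 2))
    (hN : ∀ p ∈ Ω, N p = ‖gradient f p‖⁻¹ • gradient f p)
    (κ : EuclideanSpace ℝ (Fin 2) → ℝ)
    -- κ(p) is defined by γ''(0) = κ(p) • N(p) for a unit-speed parametrization γ of
    -- the level curve through p with (γ'(0), N(p)) positively oriented
    (hκ : ∀ p ∈ Ω, ∃ γ : ℝ → EuclideanSpace ℝ (Fin 2),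
      ContDiff ℝ 2 γ ∧ γ 0 = p ∧
      (∀ᶠ s in nhds 0, f (γ s) = f p) ∧
      (∀ᶠ s in nhds 0, ‖deriv γ s‖ = 1) ∧
      (deriv γ 0) 0 = (N p) 1 ∧ (deriv γ 0) 1 = -((N p) 0) ∧
      deriv (deriv γ) 0 = κ p • N p) :
    (∀ p ∈ Ω, lap f p = 0) ↔
      (∀ p ∈ Ω, κ p * ‖gradient f p‖ = hessQF f p (N p)) := by
  constructor
  · intro H p hp
    have hk := key_identity hΩ f hf hgrad N hN κ hκ p hp
    have h0 := H p hp
    linarith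
  · intro H p hp
    have hk := key_identity hΩ f hf hgrad N hN κ hκ p hp
    have h0 := H p hp
    linarith
end

section
/- Let U be a critical-point-free harmonic function on a domain Ω ⊆ ℝⁿ and let α : (−δ, δ) → Ω be an integral curve of the unit vector field ∇U/‖∇U‖. Then for all s ∈ (−δ, δ), ‖∇U(α(s))‖ = ‖∇U(α(0))‖ · exp((n−1) ∫₀ˢ H(α(ξ)) dξ), where H(p) is the mean curvature at p of the level hypersurface of U through p, oriented by ∇U/‖∇U‖. -/
open scoped InnerProductSpace

lemma tr_onb {n : ℕ} (A : EuclideanSpace ℝ (Fin n) →L[ℝ] EuclideanSpace ℝ (Fin n))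
    (b c : OrthonormalBasis (Fin n) ℝ (EuclideanSpace ℝ (Fin n))) :
    ∑ i, ⟪A (b i), b i⟫_ℝ = ∑ i, ⟪A (c i), c i⟫_ℝ := by
  have h1 : ∀ j, ⟪A (b j), b j⟫_ℝ = ∑ i, ⟪A (b j), c i⟫_ℝ * ⟪c i, b j⟫_ℝ := fun j =>
    (c.sum_inner_mul_inner (A (b j)) (b j)).symm
  calc ∑ j, ⟪A (b j), b j⟫_ℝ
      = ∑ j, ∑ i, ⟪A (b j), c i⟫_ℝ * ⟪c i, b j⟫_ℝ := by simp_rw [h1]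
    _ = ∑ i, ∑ j, ⟪A (b j), c i⟫_ℝ * ⟪c i, b j⟫_ℝ := Finset.sum_comm
    _ = ∑ i, ⟪A (c i), c i⟫_ℝ := by
        refine Finset.sum_congr rfl fun i _ => ?_
        have : ∀ j, ⟪A (b j), c i⟫_ℝ * ⟪c i, b j⟫_ℝ
            = ⟪c i, b j⟫_ℝ * ⟪b j, ContinuousLinearMap.adjoint A (c i)⟫_ℝ := by
          intro j
          rw [ContinuousLinearMap.adjoint_inner_right, mul_comm]
        simp_rw [this]
        rw [b.sum_inner_mul_inner (c i) (ContinuousLinearMap.adjoint A (c i)),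
          ContinuousLinearMap.adjoint_inner_right]

lemma H_key {n : ℕ} (hn : 2 ≤ n) (U : EuclideanSpace ℝ (Fin n) → ℝ)
    (p : EuclideanSpace ℝ (Fin n))
    (hg : gradient U p ≠ 0) (hlap : lap U p = 0)
    (Np : EuclideanSpace ℝ (Fin n)) (hNp : Np = ‖gradient U p‖⁻¹ • gradient U p)
    (Hp : ℝ)
    (hH : ∀ b : Fin (n - 1) → EuclideanSpace ℝ (Fin n),
      Orthonormal ℝ b → (∀ i, ⟪b i, Np⟫_ℝ = 0) →
      Hp = (∑ i, -(hessQF U p (b i)) / ‖gradient U p‖) / (n - 1)) :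
    Hp = ⟪fderiv ℝ (gradient U) p (gradient U p), gradient U p⟫_ℝ /
      ((n - 1) * ‖gradient U p‖ ^ 3) := by
  set g := gradient U p with hgdef
  set A := fderiv ℝ (gradient U) p with hAdef
  have hgn : ‖g‖ ≠ 0 := norm_ne_zero_iff.mpr hg
  have hn1 : (n : ℝ) - 1 ≠ 0 := by
    have : (2 : ℝ) ≤ n := by exact_mod_cast hn
    linarith
  set u : EuclideanSpace ℝ (Fin n) := ‖g‖⁻¹ • g with hu
  have hun : ‖u‖ = 1 := by
    rw [hu, norm_smul, norm_inv, norm_norm, inv_mul_cancel₀ hgn]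
  -- extend u to an orthonormal basis
  have hcard : Module.finrank ℝ (EuclideanSpace ℝ (Fin n)) = Fintype.card (Fin n) := by
    simp [finrank_euclideanSpace_fin]
  have z : Fin n := ⟨0, by omega⟩
  have horth : Orthonormal ℝ (({(⟨0, by omega⟩ : Fin n)} : Set (Fin n)).restrict
      (fun _ : Fin n => u)) := by
    constructor
    · intro i; exact hun
    · intro i j hij
      exact absurd (Subsingleton.elim i j) hij
  obtain ⟨b, hb⟩ := horth.exists_orthonormalBasis_extension_of_card_eq hcard
  have hb0 : b ⟨0, by omega⟩ = u := hb _ rfl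
  have hn' : n - 1 + 1 = n := by omega
  set emb : Fin (n - 1) → Fin n := fun j => Fin.cast hn' j.succ with hembdef
  have hembinj : Function.Injective emb :=
    (Fin.cast_injective hn').comp (Fin.succ_injective _)
  have hembne : ∀ j, emb j ≠ ⟨0, by omega⟩ := by
    intro j h
    have := congrArg Fin.val h
    simp [hembdef] at this
  set c : Fin (n - 1) → EuclideanSpace ℝ (Fin n) := fun j => b (emb j) with hcdef
  have hc : Orthonormal ℝ c := b.orthonormal.comp emb hembinj
  have hperp : ∀ j, ⟪c j, Np⟫_ℝ = 0 := by
    intro j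
    rw [hNp, ← hb0]
    exact b.orthonormal.2 (hembne j)
  have hHp := hH c hc hperp
  -- trace identity
  have htr : ∑ i, ⟪A (b i), b i⟫_ℝ = 0 := by
    rw [tr_onb A b (EuclideanSpace.basisFun (Fin n) ℝ)]
    rw [← hlap]
    unfold lap
    refine Finset.sum_congr rfl fun i _ => ?_
    rw [EuclideanSpace.basisFun_apply]
  have hsplit : ∑ i, ⟪A (b i), b i⟫_ℝ
      = ⟪A (b ⟨0, by omega⟩), b ⟨0, by omega⟩⟫_ℝ + ∑ j, ⟪A (c j), c j⟫_ℝ := by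
    rw [← Fintype.sum_equiv (finCongr hn') (fun i => ⟪A (b (finCongr hn' i)), b (finCongr hn' i)⟫_ℝ)
      (fun i => ⟪A (b i), b i⟫_ℝ) (fun i => rfl)]
    rw [Fin.sum_univ_succ]
    rfl
  have hAuu : ⟪A u, u⟫_ℝ = ‖g‖⁻¹ * ‖g‖⁻¹ * ⟪A g, g⟫_ℝ := by
    rw [hu, map_smul, real_inner_smul_left, real_inner_smul_right]; ring
  have hsum : ∑ j, ⟪A (c j), c j⟫_ℝ = -⟪A u, u⟫_ℝ := by
    have := htr
    rw [hsplit, hb0] at this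
    linarith
  have hhess : ∀ j, hessQF U p (c j) = ⟪A (c j), c j⟫_ℝ := fun j => rfl
  rw [hHp]
  simp_rw [hhess, neg_div, Finset.sum_neg_distrib, ← Finset.sum_div, hsum, hAuu]
  set t := ⟪A g, g⟫_ℝ with ht
  field_simp

lemma grad_contDiffAt {n : ℕ} {U : EuclideanSpace ℝ (Fin n) → ℝ}
    {p : EuclideanSpace ℝ (Fin n)} (h : ContDiffAt ℝ 2 U p) :
    ContDiffAt ℝ 1 (gradient U) p := by
  have h1 : ContDiffAt ℝ 1 (fderiv ℝ U) p := h.fderiv_right (by norm_num)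
  have h2 : gradient U = fun x => (InnerProductSpace.toDual ℝ (EuclideanSpace ℝ (Fin n))).symm
      (fderiv ℝ U x) := rfl
  rw [h2]
  exact ((InnerProductSpace.toDual ℝ (EuclideanSpace ℝ (Fin n))).symm.contDiff.comp_contDiffAt p h1)

theorem stmt5 {n : ℕ} (hn : 2 ≤ n)
    {Ω : Set (EuclideanSpace ℝ (Fin n))} (hΩ : IsOpen Ω)
    (U : EuclideanSpace ℝ (Fin n) → ℝ) (hU : ContDiffOn ℝ 2 U Ω)
    (hgrad : ∀ p ∈ Ω, gradient U p ≠ 0)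
    (hharm : ∀ p ∈ Ω, lap U p = 0)
    (N : EuclideanSpace ℝ (Fin n) → EuclideanSpace ℝ (Fin n))
    (hN : ∀ p ∈ Ω, N p = ‖gradient U p‖⁻¹ • gradient U p)
    (H : EuclideanSpace ℝ (Fin n) → ℝ)
    -- H(p) is the mean curvature of the level set {U = U(p)} at p: the average over
    -- unit tangent vectors v of −D²_v U(p)/‖∇U(p)‖
    (hH : ∀ p ∈ Ω, ∀ b : Fin (n - 1) → EuclideanSpace ℝ (Fin n),
      Orthonormal ℝ b → (∀ i, ⟪b i, N p⟫_ℝ = 0) →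
      H p = (∑ i, -(hessQF U p (b i)) / ‖gradient U p‖) / (n - 1))
    (δ : ℝ) (hδ : 0 < δ)
    (α : ℝ → EuclideanSpace ℝ (Fin n))
    (hα : ∀ s ∈ Set.Ioo (-δ) δ, α s ∈ Ω ∧ HasDerivAt α (N (α s)) s) :
    ∀ s ∈ Set.Ioo (-δ) δ,
      ‖gradient U (α s)‖ =
        ‖gradient U (α 0)‖ * Real.exp ((n - 1) * ∫ ξ in (0:ℝ)..s, H (α ξ)) := by
  set J := Set.Ioo (-δ) δ with hJdef
  have h0J : (0:ℝ) ∈ J := ⟨by linarith, hδ⟩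
  have hn1 : (n : ℝ) - 1 ≠ 0 := by
    have : (2 : ℝ) ≤ n := by exact_mod_cast hn
    linarith
  set φ : ℝ → ℝ := fun s => ‖gradient U (α s)‖ with hφdef
  set K : ℝ → ℝ := fun s =>
    ⟪fderiv ℝ (gradient U) (α s) (gradient U (α s)), gradient U (α s)⟫_ℝ /
      ((n - 1) * ‖gradient U (α s)‖ ^ 3) with hKdef
  -- H ∘ α = K on J
  have hHK : ∀ s ∈ J, H (α s) = K s := by
    intro s hs
    obtain ⟨hpΩ, -⟩ := hα s hs
    exact H_key hn U (α s) (hgrad _ hpΩ) (hharm _ hpΩ) (N (α s)) (hN _ hpΩ) (H (α s))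
      (fun b hb hperp => hH _ hpΩ b hb hperp)
  -- derivative of φ on J
  have hderiv : ∀ s ∈ J, HasDerivAt φ (((n : ℝ) - 1) * (K s * φ s)) s := by
    intro s hs
    obtain ⟨hpΩ, hα'⟩ := hα s hs
    have hg : gradient U (α s) ≠ 0 := hgrad _ hpΩ
    have hgn : ‖gradient U (α s)‖ ≠ 0 := norm_ne_zero_iff.mpr hg
    have hcd : ContDiffAt ℝ 2 U (α s) := hU.contDiffAt (hΩ.mem_nhds hpΩ)
    have hgd : DifferentiableAt ℝ (gradient U) (α s) :=
      (grad_contDiffAt hcd).differentiableAt one_ne_zero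
    have hv : HasDerivAt (fun t => gradient U (α t)) (fderiv ℝ (gradient U) (α s) (N (α s))) s :=
      hgd.hasFDerivAt.comp_hasDerivAt s hα'
    have hψ : HasDerivAt (fun t => ⟪gradient U (α t), gradient U (α t)⟫_ℝ)
        (⟪gradient U (α s), fderiv ℝ (gradient U) (α s) (N (α s))⟫_ℝ +
          ⟪fderiv ℝ (gradient U) (α s) (N (α s)), gradient U (α s)⟫_ℝ) s :=
      HasDerivAt.inner (𝕜 := ℝ) hv hv
    have hψne : ⟪gradient U (α s), gradient U (α s)⟫_ℝ ≠ 0 := by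
      rw [real_inner_self_eq_norm_mul_norm]
      positivity
    have hsq := hψ.sqrt hψne
    have hφeq : φ = fun t => Real.sqrt ⟪gradient U (α t), gradient U (α t)⟫_ℝ := by
      funext t
      rw [hφdef, real_inner_self_eq_norm_mul_norm, Real.sqrt_mul_self (norm_nonneg _)]
    rw [hφeq]
    convert hsq using 1
    have hNs : N (α s) = ‖gradient U (α s)‖⁻¹ • gradient U (α s) := hN _ hpΩ
    have hsqrt : Real.sqrt ⟪gradient U (α s), gradient U (α s)⟫_ℝ = ‖gradient U (α s)‖ := by
      rw [real_inner_self_eq_norm_mul_norm, Real.sqrt_mul_self (norm_nonneg _)]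
    rw [hNs, map_smul, real_inner_smul_left, real_inner_smul_right]
    have halg : ∀ (c r t : ℝ), c ≠ 0 → r ≠ 0 →
        c * (t / (c * r ^ 3) * r) = (r⁻¹ * t + r⁻¹ * t) / (2 * r) := by
      intro c r t hc hr
      field_simp
      ring
    simp only [hKdef, hsqrt]
    rw [real_inner_comm (gradient U (α s)) (fderiv ℝ (gradient U) (α s) (gradient U (α s)))]
    exact halg _ _ _ hn1 hgn
  -- continuity of K on J
  have hJo : IsOpen J := isOpen_Ioo
  have hKcont : ContinuousOn K J := by
    apply continuousOn_of_forall_continuousAt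
    intro s hs
    obtain ⟨hpΩ, hα'⟩ := hα s hs
    have hαc : ContinuousAt α s := hα'.continuousAt
    have hcd : ContDiffAt ℝ 2 U (α s) := hU.contDiffAt (hΩ.mem_nhds hpΩ)
    have h1 : ContinuousAt (fun x => fderiv ℝ (gradient U) x) (α s) :=
      ((grad_contDiffAt hcd).fderiv_right (m := 0) (by norm_num)).continuousAt
    have h2 : ContinuousAt (gradient U) (α s) := (grad_contDiffAt hcd).continuousAt
    have hB : ContinuousAt (fun t => fderiv ℝ (gradient U) (α t)) s := h1.comp hαc
    have hw : ContinuousAt (fun t => gradient U (α t)) s := h2.comp hαc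
    have hBw : ContinuousAt (fun t => fderiv ℝ (gradient U) (α t) (gradient U (α t))) s :=
      hB.clm_apply hw
    have hnum : ContinuousAt
        (fun t => ⟪fderiv ℝ (gradient U) (α t) (gradient U (α t)), gradient U (α t)⟫_ℝ) s :=
      hBw.inner hw
    have hden : ContinuousAt (fun t => ((n : ℝ) - 1) * ‖gradient U (α t)‖ ^ 3) s :=
      (continuousAt_const.mul ((hw.norm).pow 3))
    have hdenne : ((n : ℝ) - 1) * ‖gradient U (α s)‖ ^ 3 ≠ 0 :=
      mul_ne_zero hn1 (pow_ne_zero _ (norm_ne_zero_iff.mpr (hgrad _ hpΩ)))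
    exact hnum.div hden hdenne
  -- antiderivative
  set F : ℝ → ℝ := fun s => ∫ ξ in (0:ℝ)..s, K ξ with hFdef
  have hFd : ∀ s ∈ J, HasDerivAt F (K s) s := by
    intro s hs
    have hsub : Set.uIcc (0:ℝ) s ⊆ J := Set.OrdConnected.uIcc_subset Set.ordConnected_Ioo h0J hs
    have hint : IntervalIntegrable K MeasureTheory.volume 0 s :=
      (hKcont.mono hsub).intervalIntegrable
    exact intervalIntegral.integral_hasDerivAt_right hint
      (hKcont.stronglyMeasurableAtFilter hJo s hs)
      ((hKcont s hs).continuousAt (hJo.mem_nhds hs))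
  -- the quotient is constant
  set G : ℝ → ℝ := fun s => φ s * Real.exp (-(((n : ℝ) - 1) * F s)) with hGdef
  have hGd : ∀ s ∈ J, HasDerivAt G 0 s := by
    intro s hs
    have h2 : HasDerivAt (fun t => Real.exp (-(((n : ℝ) - 1) * F t)))
        (Real.exp (-(((n : ℝ) - 1) * F s)) * (-(((n : ℝ) - 1) * K s))) s :=
      (((hFd s hs).const_mul ((n : ℝ) - 1)).neg).exp
    have h3 : HasDerivAt (fun t => φ t * Real.exp (-(((n : ℝ) - 1) * F t))) _ s :=
      (hderiv s hs).mul h2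
    convert h3 using 1
    ring
  have hconst : ∀ s ∈ J, G s = G 0 := by
    intro s hs
    apply (convex_Ioo (-δ) δ).is_const_of_fderivWithin_eq_zero
      (fun x hx => ((hGd x hx).differentiableAt).differentiableWithinAt)
      (fun x hx => ?_) hs h0J
    rw [fderivWithin_eq_fderiv (hJo.uniqueDiffOn x hx) ((hGd x hx).differentiableAt),
      ((hGd x hx).hasFDerivAt).fderiv]
    exact ContinuousLinearMap.ext fun y => by simp
  -- conclude
  intro s hs
  have hGs := hconst s hs
  have hF0 : F 0 = 0 := intervalIntegral.integral_same
  rw [hGdef] at hGs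
  simp only [hF0, mul_zero, neg_zero, Real.exp_zero, mul_one] at hGs
  have hint_eq : (∫ ξ in (0:ℝ)..s, H (α ξ)) = F s := by
    apply intervalIntegral.integral_congr
    intro ξ hξ
    exact hHK ξ (Set.OrdConnected.uIcc_subset Set.ordConnected_Ioo h0J hs hξ)
  have : φ s = φ 0 * Real.exp (((n : ℝ) - 1) * F s) := by
    rw [Real.exp_neg, ← div_eq_mul_inv, div_eq_iff (Real.exp_ne_zero _)] at hGs
    exact hGs
  rw [hint_eq]
  exact this
end

section
/- Let U be a critical-point-free harmonic function on a domain Ω ⊆ ℝ² and α : (−δ, δ) → Ω an integral curve of ∇U/‖∇U‖. Then ‖∇U(α(s))‖ = ‖∇U(α(0))‖ · exp(∫₀ˢ κ(α(ξ)) dξ), where κ(p) is the signed curvature at p of the level curve of U through p, signed with respect to the normal ∇U/‖∇U‖. -/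
open scoped InnerProductSpace

lemma inner_map_expand (A : EuclideanSpace ℝ (Fin 2) →L[ℝ] EuclideanSpace ℝ (Fin 2))
    (v : EuclideanSpace ℝ (Fin 2)) :
    ⟪A v, v⟫_ℝ = v 0 * v 0 * ⟪A (EuclideanSpace.single 0 1), EuclideanSpace.single 0 (1:ℝ)⟫_ℝ
      + v 0 * v 1 * ⟪A (EuclideanSpace.single 0 1), EuclideanSpace.single 1 (1:ℝ)⟫_ℝ
      + v 1 * v 0 * ⟪A (EuclideanSpace.single 1 1), EuclideanSpace.single 0 (1:ℝ)⟫_ℝ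
      + v 1 * v 1 * ⟪A (EuclideanSpace.single 1 1), EuclideanSpace.single 1 (1:ℝ)⟫_ℝ := by
  have hv : v = v 0 • EuclideanSpace.single 0 1 + v 1 • EuclideanSpace.single 1 1 := by
    ext j; fin_cases j <;> simp [EuclideanSpace.single_apply]
  conv_lhs => rw [hv]
  simp only [map_add, map_smul, inner_add_left, inner_add_right, real_inner_smul_left,
    real_inner_smul_right]
  ring

lemma key_pointwise (U : EuclideanSpace ℝ (Fin 2) → ℝ) (κ : EuclideanSpace ℝ (Fin 2) → ℝ)
    (p : EuclideanSpace ℝ (Fin 2)) (hgrad : gradient U p ≠ 0) (hharm : lap U p = 0)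
    (hκp : ∀ T : EuclideanSpace ℝ (Fin 2), ‖T‖ = 1 → ⟪T, gradient U p⟫_ℝ = 0 →
      κ p = -(hessQF U p T) / ‖gradient U p‖) :
    κ p * ‖gradient U p‖ ^ 3
      = ⟪fderiv ℝ (gradient U) p (gradient U p), gradient U p⟫_ℝ := by
  set g := gradient U p with hg
  set r := ‖g‖ with hrdef
  have hr : r ≠ 0 := norm_ne_zero_iff.mpr hgrad
  set A := fderiv ℝ (gradient U) p with hA
  set T : EuclideanSpace ℝ (Fin 2) :=
    r⁻¹ • ((-(g 1)) • EuclideanSpace.single 0 1 + g 0 • EuclideanSpace.single 1 1) with hT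
  have hT0 : T 0 = r⁻¹ * (-(g 1)) := by
    simp [hT, EuclideanSpace.single_apply]
  have hT1 : T 1 = r⁻¹ * g 0 := by
    simp [hT, EuclideanSpace.single_apply]
  have hg2 : g 0 * g 0 + g 1 * g 1 = r ^ 2 := by
    have := real_inner_self_eq_norm_sq g
    simp only [PiLp.inner_apply, RCLike.inner_apply, conj_trivial, Fin.sum_univ_two] at this
    rw [hrdef, ← this]
  have hTnorm : ‖T‖ = 1 := by
    have h2 : ‖T‖ ^ 2 = 1 := by
      rw [← real_inner_self_eq_norm_sq]
      have : ⟪T, T⟫_ℝ = T 0 * T 0 + T 1 * T 1 := by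
        simp only [PiLp.inner_apply, RCLike.inner_apply, conj_trivial, Fin.sum_univ_two]
      rw [this, hT0, hT1]
      field_simp
      linarith [hg2]
    nlinarith [norm_nonneg T]
  have hTg : ⟪T, g⟫_ℝ = 0 := by
    have : ⟪T, g⟫_ℝ = T 0 * g 0 + T 1 * g 1 := by
      simp [PiLp.inner_apply, RCLike.inner_apply, Fin.sum_univ_two]; ring
    rw [this, hT0, hT1]; ring
  have hκT := hκp T hTnorm hTg
  have hlap : ⟪A (EuclideanSpace.single 0 1), EuclideanSpace.single 0 (1:ℝ)⟫_ℝ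
      + ⟪A (EuclideanSpace.single 1 1), EuclideanSpace.single 1 (1:ℝ)⟫_ℝ = 0 := by
    have := hharm
    unfold lap at this
    simpa [Fin.sum_univ_two, hA] using this
  have hQT : hessQF U p T = ⟪A T, T⟫_ℝ := rfl
  rw [hκT, hQT, inner_map_expand, inner_map_expand A g, hT0, hT1]
  set M00 := ⟪A (EuclideanSpace.single 0 1), EuclideanSpace.single 0 (1:ℝ)⟫_ℝ
  set M01 := ⟪A (EuclideanSpace.single 0 1), EuclideanSpace.single 1 (1:ℝ)⟫_ℝ
  set M10 := ⟪A (EuclideanSpace.single 1 1), EuclideanSpace.single 0 (1:ℝ)⟫_ℝ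
  set M11 := ⟪A (EuclideanSpace.single 1 1), EuclideanSpace.single 1 (1:ℝ)⟫_ℝ
  have hM : M11 = -M00 := by linarith
  rw [hM]
  field_simp
  ring

theorem stmt6 {Ω : Set (EuclideanSpace ℝ (Fin 2))} (hΩ : IsOpen Ω)
    (U : EuclideanSpace ℝ (Fin 2) → ℝ) (hU : ContDiffOn ℝ 2 U Ω)
    (hgrad : ∀ p ∈ Ω, gradient U p ≠ 0)
    (hharm : ∀ p ∈ Ω, lap U p = 0)
    (N : EuclideanSpace ℝ (Fin 2) → EuclideanSpace ℝ (Fin 2))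
    (hN : ∀ p ∈ Ω, N p = ‖gradient U p‖⁻¹ • gradient U p)
    (κ : EuclideanSpace ℝ (Fin 2) → ℝ)
    -- κ(p) = −D²_T U(p)/‖∇U(p)‖ where T is a unit tangent to the level curve at p
    (hκ : ∀ p ∈ Ω, ∀ T : EuclideanSpace ℝ (Fin 2),
      ‖T‖ = 1 → ⟪T, gradient U p⟫_ℝ = 0 →
      κ p = -(hessQF U p T) / ‖gradient U p‖)
    (δ : ℝ) (hδ : 0 < δ)
    (α : ℝ → EuclideanSpace ℝ (Fin 2))
    (hα : ∀ s ∈ Set.Ioo (-δ) δ, α s ∈ Ω ∧ HasDerivAt α (N (α s)) s) :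
    ∀ s ∈ Set.Ioo (-δ) δ,
      ‖gradient U (α s)‖ =
        ‖gradient U (α 0)‖ * Real.exp (∫ ξ in (0:ℝ)..s, κ (α ξ)) := by
  intro s hs
  have h0 : (0:ℝ) ∈ Set.Ioo (-δ) δ := ⟨by linarith, hδ⟩
  -- regularity of the gradient
  have hcd1 : ContDiffOn ℝ 1 (gradient U) Ω := by
    have hf : ContDiffOn ℝ 1 (fderiv ℝ U) Ω := hU.fderiv_of_isOpen hΩ (by norm_num)
    exact ((InnerProductSpace.toDual ℝ (EuclideanSpace ℝ (Fin 2))).symm.contDiff).comp_contDiffOn hf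
  have hgradcont : ContinuousOn (gradient U) Ω := hcd1.continuousOn
  have hAcont : ContinuousOn (fun q => fderiv ℝ (gradient U) q) Ω :=
    hcd1.continuousOn_fderiv_of_isOpen hΩ le_rfl
  have hdiff : ∀ p ∈ Ω, HasFDerivAt (gradient U) (fderiv ℝ (gradient U) p) p := fun p hp =>
    (((hcd1.differentiableOn one_ne_zero).differentiableAt (hΩ.mem_nhds hp)).hasFDerivAt)
  have hαcont : ContinuousOn α (Set.Ioo (-δ) δ) := fun t ht =>
    ((hα t ht).2).continuousAt.continuousWithinAt
  -- key pointwise identity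
  have hkey : ∀ p ∈ Ω, κ p * ‖gradient U p‖ ^ 3
      = ⟪fderiv ℝ (gradient U) p (gradient U p), gradient U p⟫_ℝ := fun p hp =>
    key_pointwise U κ p (hgrad p hp) (hharm p hp) (hκ p hp)
  set k : ℝ → ℝ := fun t => κ (α t) with hk
  set φ : ℝ → ℝ := fun t => ⟪gradient U (α t), gradient U (α t)⟫_ℝ with hφdef
  -- derivative of φ
  have hφnorm : ∀ t, φ t = ‖gradient U (α t)‖ ^ 2 := fun t =>
    real_inner_self_eq_norm_sq _
  have hφ' : ∀ t ∈ Set.Ioo (-δ) δ, HasDerivAt φ (2 * k t * φ t) t := by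
    intro t ht
    have hpΩ := (hα t ht).1
    have hv : HasDerivAt (fun u => gradient U (α u))
        (fderiv ℝ (gradient U) (α t) (N (α t))) t :=
      (hdiff _ hpΩ).comp_hasDerivAt t (hα t ht).2
    have h := HasDerivAt.inner (𝕜 := ℝ) hv hv
    refine h.congr_deriv ?_
    symm
    have hr : ‖gradient U (α t)‖ ≠ 0 := norm_ne_zero_iff.mpr (hgrad _ hpΩ)
    rw [hN _ hpΩ, map_smul]
    rw [real_inner_smul_right, real_inner_smul_left, real_inner_comm]
    have hk3 := hkey _ hpΩ
    have hφt : φ t = ‖gradient U (α t)‖ ^ 2 := hφnorm t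
    rw [hφt, ← hk3]
    field_simp
    ring
  -- continuity of k on the interval
  have hkcont : ContinuousOn k (Set.Ioo (-δ) δ) := by
    have hgα : ContinuousOn (fun t => gradient U (α t)) (Set.Ioo (-δ) δ) :=
      hgradcont.comp hαcont (fun t ht => (hα t ht).1)
    have hAα : ContinuousOn (fun t => fderiv ℝ (gradient U) (α t)) (Set.Ioo (-δ) δ) :=
      hAcont.comp hαcont (fun t ht => (hα t ht).1)
    have hecont : ContinuousOn (fun t =>
        ⟪fderiv ℝ (gradient U) (α t) (gradient U (α t)), gradient U (α t)⟫_ℝ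
          / ‖gradient U (α t)‖ ^ 3) (Set.Ioo (-δ) δ) := by
      apply ContinuousOn.div
      · exact ContinuousOn.inner (hAα.clm_apply hgα) hgα
      · exact (hgα.norm).pow 3
      · intro t ht
        exact pow_ne_zero 3 (norm_ne_zero_iff.mpr (hgrad _ (hα t ht).1))
    apply hecont.congr
    intro t ht
    have hr : ‖gradient U (α t)‖ ≠ 0 := norm_ne_zero_iff.mpr (hgrad _ (hα t ht).1)
    show k t = _
    rw [eq_div_iff (pow_ne_zero 3 hr)]
    exact hkey _ (hα t ht).1
  -- the integral function and its derivative
  set I : ℝ → ℝ := fun u => ∫ t in (0:ℝ)..u, k t with hI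
  have hI' : ∀ t ∈ Set.Ioo (-δ) δ, HasDerivAt I (k t) t := by
    intro t ht
    have hsub : Set.uIcc 0 t ⊆ Set.Ioo (-δ) δ :=
      Set.OrdConnected.uIcc_subset Set.ordConnected_Ioo h0 ht
    have hint : IntervalIntegrable k MeasureTheory.volume 0 t :=
      (hkcont.mono hsub).intervalIntegrable
    have hmeas := hkcont.stronglyMeasurableAtFilter
      (μ := MeasureTheory.volume) isOpen_Ioo t ht
    have hca : ContinuousAt k t := hkcont.continuousAt (isOpen_Ioo.mem_nhds ht)
    exact intervalIntegral.integral_hasDerivAt_right hint hmeas hca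
  -- the function H is constant
  set H : ℝ → ℝ := fun t => φ t * Real.exp (-(2 * I t)) with hHdef
  have hH' : ∀ t ∈ Set.Ioo (-δ) δ, HasDerivAt H 0 t := by
    intro t ht
    have hexp : HasDerivAt (fun u => Real.exp (-(2 * I u)))
        (Real.exp (-(2 * I t)) * -(2 * k t)) t := (((hI' t ht).const_mul 2).neg).exp
    have h := (hφ' t ht).mul hexp
    refine h.congr_deriv ?_
    ring
  have hconst : H s = H 0 := by
    apply Convex.is_const_of_fderivWithin_eq_zero (𝕜 := ℝ) (convex_Ioo (-δ) δ)
    · intro x hx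
      exact ((hH' x hx).differentiableAt).differentiableWithinAt
    · intro x hx
      rw [fderivWithin_of_isOpen isOpen_Ioo hx]
      have : HasFDerivAt H (0 : ℝ →L[ℝ] ℝ) x := by
        have := (hH' x hx).hasFDerivAt
        simpa using this
      exact this.fderiv
    · exact hs
    · exact h0
  have hI0 : I 0 = 0 := intervalIntegral.integral_same
  have hφeq : φ s = φ 0 * Real.exp (2 * I s) := by
    have h1 : φ s * Real.exp (-(2 * I s)) = φ 0 * Real.exp (-(2 * I 0)) := hconst
    rw [hI0] at h1
    simp only [mul_zero, neg_zero, Real.exp_zero, mul_one] at h1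
    have h2 := congrArg (fun x => x * Real.exp (2 * I s)) h1
    rw [mul_assoc, ← Real.exp_add] at h2
    simpa using h2
  have hexp2 : Real.exp (2 * I s) = Real.exp (I s) * Real.exp (I s) := by
    rw [two_mul, Real.exp_add]
  have hgoal : ‖gradient U (α s)‖ ^ 2 = (‖gradient U (α 0)‖ * Real.exp (I s)) ^ 2 := by
    rw [← hφnorm s, hφeq, hφnorm 0, hexp2]; ring
  have h1 : ‖gradient U (α s)‖ = Real.sqrt (‖gradient U (α s)‖ ^ 2) :=
    (Real.sqrt_sq (norm_nonneg _)).symm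
  rw [h1, hgoal, Real.sqrt_sq (by positivity)]
end

section
/- Let U be a critical-point-free harmonic function on a domain Ω ⊆ ℝⁿ, α : (−δ, δ) → Ω an integral curve of ∇U/‖∇U‖, and H the mean curvature of the level sets of U (oriented by ∇U/‖∇U‖). Then the function s ↦ log‖∇U(α(s))‖ is differentiable with derivative (n−1)·H(α(s)). -/
open scoped InnerProductSpace

/-- The "trace" sum `∑ ⟪A bᵢ, bᵢ⟫` is independent of the orthonormal basis. -/
lemma sum_inner_map_inner_eq {E : Type*} [NormedAddCommGroup E] [InnerProductSpace ℝ E]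
    {ι κ : Type*} [Fintype ι] [Fintype κ]
    (b : OrthonormalBasis ι ℝ E) (c : OrthonormalBasis κ ℝ E) (A : E →L[ℝ] E) :
    ∑ i, ⟪A (b i), b i⟫_ℝ = ∑ j, ⟪A (c j), c j⟫_ℝ := by
  have expand : ∀ x : E, A x = ∑ j, ⟪c j, x⟫_ℝ • A (c j) := by
    intro x
    conv_lhs => rw [← c.sum_repr' x]
    rw [map_sum]
    exact Finset.sum_congr rfl fun j _ => A.map_smul _ _
  have h1 : ∀ i, ⟪A (b i), b i⟫_ℝ = ∑ j, ⟪c j, b i⟫_ℝ * ⟪A (c j), b i⟫_ℝ := by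
    intro i
    rw [expand (b i), sum_inner]
    exact Finset.sum_congr rfl fun j _ => real_inner_smul_left _ _ _
  calc ∑ i, ⟪A (b i), b i⟫_ℝ
      = ∑ i, ∑ j, ⟪c j, b i⟫_ℝ * ⟪A (c j), b i⟫_ℝ := Finset.sum_congr rfl fun i _ => h1 i
    _ = ∑ j, ∑ i, ⟪c j, b i⟫_ℝ * ⟪A (c j), b i⟫_ℝ := Finset.sum_comm
    _ = ∑ j, ⟪A (c j), c j⟫_ℝ := by
        refine Finset.sum_congr rfl fun j _ => ?_
        calc ∑ i, ⟪c j, b i⟫_ℝ * ⟪A (c j), b i⟫_ℝ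
            = ∑ i, ⟪A (c j), b i⟫_ℝ * ⟪b i, c j⟫_ℝ := by
              refine Finset.sum_congr rfl fun i _ => ?_
              rw [real_inner_comm (b i) (c j)]; ring
          _ = ⟪A (c j), c j⟫_ℝ := b.sum_inner_mul_inner _ _

lemma gradient_eq_sum {n : ℕ} (f : EuclideanSpace ℝ (Fin n) → ℝ) :
    gradient f = fun q => ∑ i, (fderiv ℝ f q (EuclideanSpace.single i 1)) •
      (EuclideanSpace.single i (1:ℝ) : EuclideanSpace ℝ (Fin n)) := by
  funext q
  conv_lhs => rw [← (EuclideanSpace.basisFun (Fin n) ℝ).sum_repr' (gradient f q)]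
  refine Finset.sum_congr rfl fun i _ => ?_
  rw [EuclideanSpace.basisFun_apply]
  congr 1
  rw [real_inner_comm]
  exact InnerProductSpace.toDual_symm_apply

theorem stmt8 {n : ℕ} (hn : 2 ≤ n)
    {Ω : Set (EuclideanSpace ℝ (Fin n))} (hΩ : IsOpen Ω)
    (U : EuclideanSpace ℝ (Fin n) → ℝ) (hU : ContDiffOn ℝ 2 U Ω)
    (hgrad : ∀ p ∈ Ω, gradient U p ≠ 0)
    (hharm : ∀ p ∈ Ω, lap U p = 0)
    (N : EuclideanSpace ℝ (Fin n) → EuclideanSpace ℝ (Fin n))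
    (hN : ∀ p ∈ Ω, N p = ‖gradient U p‖⁻¹ • gradient U p)
    (H : EuclideanSpace ℝ (Fin n) → ℝ)
    -- H(p) is the mean curvature of the level set {U = U(p)} at p: the average over
    -- unit tangent vectors v of −D²_v U(p)/‖∇U(p)‖
    (hH : ∀ p ∈ Ω, ∀ b : Fin (n - 1) → EuclideanSpace ℝ (Fin n),
      Orthonormal ℝ b → (∀ i, ⟪b i, N p⟫_ℝ = 0) →
      H p = (∑ i, -(hessQF U p (b i)) / ‖gradient U p‖) / (n - 1))
    (δ : ℝ) (hδ : 0 < δ)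
    (α : ℝ → EuclideanSpace ℝ (Fin n))
    (hα : ∀ s ∈ Set.Ioo (-δ) δ, α s ∈ Ω ∧ HasDerivAt α (N (α s)) s) :
    ∀ s ∈ Set.Ioo (-δ) δ,
      HasDerivAt (fun τ => Real.log ‖gradient U (α τ)‖) ((n - 1) * H (α s)) s := by
  intro s hs
  obtain ⟨hpΩ, hαs⟩ := hα s hs
  set p := α s with hpdef
  set G := gradient U p with hGdef
  have hG0 : G ≠ 0 := hgrad p hpΩ
  have hr : ‖G‖ ≠ 0 := norm_ne_zero_iff.2 hG0
  -- differentiability of the gradient at p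
  have hUp : ContDiffAt ℝ 2 U p := hU.contDiffAt (hΩ.mem_nhds hpΩ)
  have hfd : ContDiffAt ℝ 1 (fderiv ℝ U) p := hUp.fderiv_right (by norm_num)
  have hdg : DifferentiableAt ℝ (gradient U) p := by
    rw [gradient_eq_sum U]
    apply DifferentiableAt.fun_sum
    intro i _
    exact ((hfd.differentiableAt one_ne_zero).clm_apply (differentiableAt_const _)).smul_const _
  set A := fderiv ℝ (gradient U) p with hAdef
  have hA : HasFDerivAt (gradient U) A p := hdg.hasFDerivAt
  -- unit normal
  have hNp : N p = ‖G‖⁻¹ • G := hN p hpΩ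
  have hNnorm : ‖N p‖ = 1 := by
    rw [hNp, norm_smul, norm_inv, norm_norm, inv_mul_cancel₀ hr]
  -- build an orthonormal basis extending N p
  have hn0 : 0 < n := by omega
  set z : Fin n := ⟨0, hn0⟩ with hzdef
  have honv : Orthonormal ℝ (Set.restrict {z} (fun _ : Fin n => N p)) := by
    constructor
    · intro i; exact hNnorm
    · intro i j hij
      exact absurd (Subtype.ext (i.2.trans j.2.symm)) hij
  have hcard : Module.finrank ℝ (EuclideanSpace ℝ (Fin n)) = Fintype.card (Fin n) := by
    simp [finrank_euclideanSpace]
  obtain ⟨B, hB⟩ := honv.exists_orthonormalBasis_extension_of_card_eq hcard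
  have hBz : B z = N p := hB z rfl
  have hm : n - 1 + 1 = n := by omega
  set f : Fin (n - 1) → Fin n := fun i => Fin.cast hm i.succ with hfdef
  have hfinj : Function.Injective f := fun a b h => by
    have := Fin.cast_injective hm h
    exact Fin.succ_injective _ this
  have hbt : Orthonormal ℝ (fun i => B (f i)) := B.orthonormal.comp f hfinj
  have hfz : ∀ i, f i ≠ z := by
    intro i h
    have : (f i).val = 0 := by rw [h]
    simp [hfdef] at this
  have hperp : ∀ i, ⟪B (f i), N p⟫_ℝ = 0 := by
    intro i
    rw [← hBz]
    exact B.orthonormal.2 (hfz i)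
  have hHp := hH p hpΩ (fun i => B (f i)) hbt hperp
  -- trace identity
  have htr : ∑ j, ⟪A (B j), B j⟫_ℝ = 0 := by
    rw [sum_inner_map_inner_eq B (EuclideanSpace.basisFun (Fin n) ℝ) A]
    have h0 := hharm p hpΩ
    unfold lap at h0
    simpa [EuclideanSpace.basisFun_apply, ← hAdef] using h0
  have hsplit : ∑ j, ⟪A (B j), B j⟫_ℝ
      = ⟪A (B z), B z⟫_ℝ + ∑ i : Fin (n - 1), ⟪A (B (f i)), B (f i)⟫_ℝ := by
    rw [← Equiv.sum_comp (finCongr hm) (fun j => ⟪A (B j), B j⟫_ℝ), Fin.sum_univ_succ]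
    have hz0 : finCongr hm (0 : Fin (n - 1 + 1)) = z := by ext; simp [hzdef]
    rw [hz0]
    rfl
  have hS : ∑ i : Fin (n - 1), ⟪A (B (f i)), B (f i)⟫_ℝ = -⟪A (N p), N p⟫_ℝ := by
    rw [← hBz]
    linarith [htr, hsplit]
  -- derivative computations
  have hαs' : HasDerivAt α (N p) s := hαs
  have hψ : HasDerivAt (fun τ => gradient U (α τ)) (A (N p)) s :=
    hA.comp_hasDerivAt s hαs'
  have hq : HasDerivAt (fun τ => ⟪gradient U (α τ), gradient U (α τ)⟫_ℝ)
      (⟪G, A (N p)⟫_ℝ + ⟪A (N p), G⟫_ℝ) s := hψ.inner ℝ hψ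
  have hpos : (0:ℝ) < ⟪G, G⟫_ℝ := by rw [real_inner_self_eq_norm_mul_norm]; positivity
  have hlog : HasDerivAt (fun τ => Real.log (⟪gradient U (α τ), gradient U (α τ)⟫_ℝ))
      ((⟪G, A (N p)⟫_ℝ + ⟪A (N p), G⟫_ℝ) / ⟪G, G⟫_ℝ) s := hq.log (ne_of_gt hpos)
  have hfinal := hlog.const_mul (1/2 : ℝ)
  have hfun : (fun τ => Real.log ‖gradient U (α τ)‖)
      = (fun τ => (1/2 : ℝ) * Real.log (⟪gradient U (α τ), gradient U (α τ)⟫_ℝ)) := by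
    funext τ
    rw [real_inner_self_eq_norm_sq, Real.log_pow]
    push_cast
    ring
  rw [hfun]
  convert hfinal using 1
  case e'_4 => rfl
  case e'_5 => rfl
  -- value computation
  rw [hHp]
  simp only [hessQF, ← hAdef]
  have e2 : ∑ i : Fin (n-1), -(⟪A (B (f i)), B (f i)⟫_ℝ) / ‖G‖
      = ⟪A (N p), N p⟫_ℝ / ‖G‖ := by
    rw [← Finset.sum_div]
    congr 1
    rw [show (∑ i : Fin (n-1), -(⟪A (B (f i)), B (f i)⟫_ℝ)) = -(∑ i : Fin (n-1), ⟪A (B (f i)), B (f i)⟫_ℝ) from by simp, hS, neg_neg]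
  rw [e2]
  have e3 : ⟪A (N p), N p⟫_ℝ = ‖G‖⁻¹ * (‖G‖⁻¹ * ⟪A G, G⟫_ℝ) := by
    rw [hNp, map_smul, real_inner_smul_left, real_inner_smul_right]
  have e4 : ⟪G, A (N p)⟫_ℝ = ‖G‖⁻¹ * ⟪A G, G⟫_ℝ := by
    rw [hNp, map_smul, real_inner_smul_right, real_inner_comm]
  have e5 : ⟪A (N p), G⟫_ℝ = ‖G‖⁻¹ * ⟪A G, G⟫_ℝ := by
    rw [hNp, map_smul, real_inner_smul_left]
  have e6 : ⟪G, G⟫_ℝ = ‖G‖ * ‖G‖ := real_inner_self_eq_norm_mul_norm G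
  rw [e3, e4, e5, e6]
  have hn1 : (n : ℝ) - 1 ≠ 0 := by
    have : (2:ℝ) ≤ (n:ℝ) := by exact_mod_cast hn
    linarith
  field_simp
  ring
end

section
/- Let Φ : ℝⁿ⁻¹ × (−ε, ε) → ℝⁿ be an orientation-preserving C² diffeomorphism onto a domain Ω, t : Ω → (−ε, ε) the last component of Φ⁻¹, φ = det dΦ/‖n‖ where n is the Hodge dual of the wedge of the ∂Φ/∂x_i, and N = n/‖n‖. Let u : (−ε, ε) → ℝ be C² with u' > 0 and U = u ∘ t. Then D_N U = u'(t)/φ and D²_N U = (u''(t) − u'(t)·∂φ/∂s)/φ², where s is arc length along integral curves of N and D_N, D²_N are the first and second directional derivatives along N. -/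
open scoped InnerProductSpace

/-- `∂Φ/∂x_j`, the coordinate tangent vectors of the hypersurfaces `Γ_t : x ↦ Φ(x, t)`. -/
noncomputable def Pd {m : ℕ} (Φ : EuclideanSpace ℝ (Fin m) × ℝ → EuclideanSpace ℝ (Fin (m + 1)))
    (q : EuclideanSpace ℝ (Fin m) × ℝ) (j : Fin m) : EuclideanSpace ℝ (Fin (m + 1)) :=
  fderiv ℝ Φ q (EuclideanSpace.single j 1, 0)

/-- `∂Φ/∂t`. -/
noncomputable def Pt {m : ℕ} (Φ : EuclideanSpace ℝ (Fin m) × ℝ → EuclideanSpace ℝ (Fin (m + 1)))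
    (q : EuclideanSpace ℝ (Fin m) × ℝ) : EuclideanSpace ℝ (Fin (m + 1)) :=
  fderiv ℝ Φ q (0, 1)

/-- The determinant of the square matrix whose first `m` columns are the coordinate
tangent vectors `∂Φ/∂x_j` and whose last column is `w`.  With `w = ∂Φ/∂t` this is
`det dΦ`; as a function of `w` it is `⟪n, w⟫` for the Hodge-dual normal `n` of
`(∂Φ/∂x₁) ∧ ⋯ ∧ (∂Φ/∂x_m)`. -/
noncomputable def detWith {m : ℕ}
    (Φ : EuclideanSpace ℝ (Fin m) × ℝ → EuclideanSpace ℝ (Fin (m + 1)))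
    (q : EuclideanSpace ℝ (Fin m) × ℝ) (w : EuclideanSpace ℝ (Fin (m + 1))) : ℝ :=
  Matrix.det (Matrix.of fun i j : Fin (m + 1) =>
    (Fin.snoc (fun j' : Fin m => Pd Φ q j') w :
      Fin (m + 1) → EuclideanSpace ℝ (Fin (m + 1))) j i)

/-- `det dΦ`, the Jacobian determinant of `Φ`. -/
noncomputable def detJn {m : ℕ}
    (Φ : EuclideanSpace ℝ (Fin m) × ℝ → EuclideanSpace ℝ (Fin (m + 1)))
    (q : EuclideanSpace ℝ (Fin m) × ℝ) : ℝ :=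
  detWith Φ q (Pt Φ q)

lemma detWith_Pd {m : ℕ} (Φ : EuclideanSpace ℝ (Fin m) × ℝ → EuclideanSpace ℝ (Fin (m + 1)))
    (q : EuclideanSpace ℝ (Fin m) × ℝ) (j : Fin m) : detWith Φ q (Pd Φ q j) = 0 := by
  unfold detWith
  rw [← Matrix.det_transpose]
  refine Matrix.det_zero_of_row_eq (i := j.castSucc) (j := Fin.last m)
    (Fin.castSucc_lt_last j).ne ?_
  funext k
  simp [Matrix.transpose_apply, Fin.snoc_castSucc, Fin.snoc_last]

noncomputable def myBasis (m : ℕ) : Module.Basis (Fin (m + 1)) ℝ (EuclideanSpace ℝ (Fin m) × ℝ) :=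
  ((PiLp.basisFun 2 ℝ (Fin m)).prod (Module.Basis.singleton (Fin 1) ℝ)).reindex finSumFinEquiv

lemma myBasis_castSucc {m : ℕ} (j : Fin m) :
    myBasis m j.castSucc = (EuclideanSpace.single j 1, (0 : ℝ)) := by
  have h : finSumFinEquiv.symm (j.castSucc) = Sum.inl j := finSumFinEquiv_symm_apply_castAdd j
  rw [myBasis, Module.Basis.reindex_apply, h]
  refine Prod.ext ?_ ?_
  · rw [Module.Basis.prod_apply_inl_fst, PiLp.basisFun_apply, EuclideanSpace.single]
  · rw [Module.Basis.prod_apply_inl_snd]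

lemma myBasis_last {m : ℕ} :
    myBasis m (Fin.last m) = ((0 : EuclideanSpace ℝ (Fin m)), (1 : ℝ)) := by
  rw [myBasis, Module.Basis.reindex_apply, finSumFinEquiv_symm_last]
  refine Prod.ext ?_ ?_
  · rw [Module.Basis.prod_apply_inr_fst]
  · rw [Module.Basis.prod_apply_inr_snd, Module.Basis.singleton_apply]

lemma detJn_eq_toMatrix_det {m : ℕ}
    (Φ : EuclideanSpace ℝ (Fin m) × ℝ → EuclideanSpace ℝ (Fin (m + 1)))
    (q : EuclideanSpace ℝ (Fin m) × ℝ) :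
    (LinearMap.toMatrix (myBasis m) (PiLp.basisFun 2 ℝ (Fin (m + 1)))
      ((fderiv ℝ Φ q : _ →L[ℝ] _) : _ →ₗ[ℝ] _)).det = detJn Φ q := by
  unfold detJn detWith
  congr 1
  ext i k
  rw [LinearMap.toMatrix_apply, PiLp.basisFun_repr]
  induction k using Fin.lastCases with
  | last =>
      rw [myBasis_last]
      simp [Fin.snoc_last, Pt]
  | cast j =>
      rw [myBasis_castSucc]
      simp [Fin.snoc_castSucc, Pd]

lemma exists_fderiv_equiv {m : ℕ}
    (Φ : EuclideanSpace ℝ (Fin m) × ℝ → EuclideanSpace ℝ (Fin (m + 1)))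
    (q : EuclideanSpace ℝ (Fin m) × ℝ) (h : detJn Φ q ≠ 0) :
    ∃ L : (EuclideanSpace ℝ (Fin m) × ℝ) ≃L[ℝ] EuclideanSpace ℝ (Fin (m + 1)),
      ⇑L = ⇑(fderiv ℝ Φ q) := by
  have hunit : IsUnit (LinearMap.toMatrix (myBasis m) (PiLp.basisFun 2 ℝ (Fin (m + 1)))
      ((fderiv ℝ Φ q : _ →L[ℝ] _) : _ →ₗ[ℝ] _)).det := by
    rw [detJn_eq_toMatrix_det]
    exact isUnit_iff_ne_zero.mpr h
  refine ⟨(LinearEquiv.ofIsUnitDet hunit).toContinuousLinearEquiv, ?_⟩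
  rw [LinearEquiv.coe_toContinuousLinearEquiv']
  exact congrArg DFunLike.coe (LinearEquiv.coe_ofIsUnitDet hunit)

lemma fderiv_apply_decomp {m : ℕ}
    (Φ : EuclideanSpace ℝ (Fin m) × ℝ → EuclideanSpace ℝ (Fin (m + 1)))
    (q v : EuclideanSpace ℝ (Fin m) × ℝ) :
    fderiv ℝ Φ q v = (∑ j, v.1 j • Pd Φ q j) + v.2 • Pt Φ q := by
  have hv1 : ∑ j, v.1 j • (EuclideanSpace.single j 1 : EuclideanSpace ℝ (Fin m)) = v.1 := by
    ext i
    rw [show ((∑ j, v.1 j • (EuclideanSpace.single j 1 : EuclideanSpace ℝ (Fin m))) i)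
        = ∑ j, (v.1 j • (EuclideanSpace.single j 1 : EuclideanSpace ℝ (Fin m))) i from
      by rw [WithLp.ofLp_sum]; exact Finset.sum_apply i Finset.univ _]
    simp [EuclideanSpace.single_apply]
  have hv : v = (∑ j, v.1 j •
      ((EuclideanSpace.single j 1 : EuclideanSpace ℝ (Fin m)), (0 : ℝ))) +
      v.2 • ((0 : EuclideanSpace ℝ (Fin m)), (1 : ℝ)) := by
    refine Prod.ext ?_ ?_
    · simp [Prod.fst_sum, hv1]
    · simp [Prod.snd_sum]
  conv_lhs => rw [hv]
  rw [map_add, map_sum, map_smul]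
  simp only [map_smul]
  rfl

theorem stmt13 (m : ℕ) (hm : 1 ≤ m) (ε : ℝ) (hε : 0 < ε)
    (S : Set (EuclideanSpace ℝ (Fin m) × ℝ)) (hS : S = Set.univ ×ˢ Set.Ioo (-ε) ε)
    (Φ : EuclideanSpace ℝ (Fin m) × ℝ → EuclideanSpace ℝ (Fin (m + 1)))
    (hΦ : ContDiffOn ℝ 2 Φ S) (hinj : Set.InjOn Φ S)
    (Ω : Set (EuclideanSpace ℝ (Fin (m + 1)))) (hΩ : Ω = Φ '' S) (hΩopen : IsOpen Ω)
    (hdet : ∀ q ∈ S, 0 < detJn Φ q)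
    -- nv is the Hodge dual of (∂Φ/∂x₁) ∧ ⋯ ∧ (∂Φ/∂x_m)
    (nv : EuclideanSpace ℝ (Fin m) × ℝ → EuclideanSpace ℝ (Fin (m + 1)))
    (hnv : ∀ q ∈ S, ∀ w, ⟪nv q, w⟫_ℝ = detWith Φ q w)
    -- N = n/‖n‖ as a unit normal field on Ω
    (N : EuclideanSpace ℝ (Fin (m + 1)) → EuclideanSpace ℝ (Fin (m + 1)))
    (hN : ∀ q ∈ S, N (Φ q) = ‖nv q‖⁻¹ • nv q)
    -- φ = det dΦ/‖n‖ as a function on Ω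
    (φ : EuclideanSpace ℝ (Fin (m + 1)) → ℝ)
    (hφ : ∀ q ∈ S, φ (Φ q) = detJn Φ q / ‖nv q‖)
    -- t : Ω → (−ε, ε) is the last component of Φ⁻¹
    (t : EuclideanSpace ℝ (Fin (m + 1)) → ℝ) (ht : ∀ q ∈ S, t (Φ q) = q.2)
    -- ∂φ/∂s is the derivative of φ along unit-speed integral curves of N
    (dφds : EuclideanSpace ℝ (Fin (m + 1)) → ℝ)
    (hdφds : ∀ p ∈ Ω, ∀ α : ℝ → EuclideanSpace ℝ (Fin (m + 1)), α 0 = p →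
      (∀ᶠ s in nhds 0, α s ∈ Ω ∧ HasDerivAt α (N (α s)) s) →
      HasDerivAt (fun s => φ (α s)) (dφds p) 0)
    (u : ℝ → ℝ) (hu : ContDiff ℝ 2 u)
    (hu' : ∀ τ ∈ Set.Ioo (-ε) ε, 0 < deriv u τ) :
    -- D_N U and D²_N U are the first and second derivatives of U = u ∘ t along the
    -- unit-speed integral curves of N
    ∀ q ∈ S, ∀ α : ℝ → EuclideanSpace ℝ (Fin (m + 1)), α 0 = Φ q →
      (∀ᶠ s in nhds 0, α s ∈ Ω ∧ HasDerivAt α (N (α s)) s) →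
      HasDerivAt (fun s => u (t (α s))) (deriv u q.2 / φ (Φ q)) 0 ∧
      HasDerivAt (deriv fun s => u (t (α s)))
        ((deriv (deriv u) q.2 - deriv u q.2 * dφds (Φ q)) / (φ (Φ q)) ^ 2) 0 := by
  have hSopen : IsOpen S := by rw [hS]; exact isOpen_univ.prod isOpen_Ioo
  have hnvPt : ∀ q' ∈ S, ⟪nv q', Pt Φ q'⟫_ℝ = detJn Φ q' := fun q' h => hnv q' h _
  have hnvnorm : ∀ q' ∈ S, ‖nv q'‖ ≠ 0 := by
    intro q' h
    rw [norm_ne_zero_iff]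
    intro h0
    have := hnvPt q' h
    rw [h0, inner_zero_left] at this
    exact (hdet q' h).ne' this.symm
  have hφpos : ∀ q' ∈ S, 0 < φ (Φ q') := by
    intro q' h
    rw [hφ q' h]
    exact div_pos (hdet q' h) ((hnvnorm q' h).lt_of_le' (norm_nonneg _))
  -- key derivative of t along integral curves
  have key : ∀ q' ∈ S, ∀ β : ℝ → EuclideanSpace ℝ (Fin (m + 1)), ∀ s₀ : ℝ,
      β s₀ = Φ q' → (∀ᶠ s in nhds s₀, β s ∈ Ω) → HasDerivAt β (N (β s₀)) s₀ →
      HasDerivAt (fun s => t (β s)) ((φ (Φ q'))⁻¹) s₀ := by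
    intro q' hq' β s₀ hβ0 hβΩ hβ'
    obtain ⟨L, hL⟩ := exists_fderiv_equiv Φ q' (hdet q' hq').ne'
    have hΦq' : ContDiffAt ℝ 2 Φ q' := hΦ.contDiffAt (hSopen.mem_nhds hq')
    have hcoe : (L : (EuclideanSpace ℝ (Fin m) × ℝ) →L[ℝ] EuclideanSpace ℝ (Fin (m + 1)))
        = fderiv ℝ Φ q' := ContinuousLinearMap.ext fun v => congrFun hL v
    have hsf : HasStrictFDerivAt Φ
        (L : (EuclideanSpace ℝ (Fin m) × ℝ) →L[ℝ] EuclideanSpace ℝ (Fin (m + 1))) q' := by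
      rw [hcoe]; exact hΦq'.hasStrictFDerivAt two_ne_zero
    set g := hsf.localInverse Φ L q' with hg
    have hg0 : g (Φ q') = q' := hsf.localInverse_apply_image
    have hgderiv : HasFDerivAt g
        (L.symm : EuclideanSpace ℝ (Fin (m + 1)) →L[ℝ] (EuclideanSpace ℝ (Fin m) × ℝ))
        (Φ q') := hsf.to_localInverse.hasFDerivAt
    have hgcont : ContinuousAt g (Φ q') := hsf.localInverse_continuousAt
    have hβt : Filter.Tendsto β (nhds s₀) (nhds (Φ q')) := hβ0 ▸ hβ'.continuousAt
    have hSmem : S ∈ nhds (g (Φ q')) := by rw [hg0]; exact hSopen.mem_nhds hq'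
    have heq : (fun s => t (β s)) =ᶠ[nhds s₀] fun s => (g (β s)).2 := by
      filter_upwards [hβΩ, hβt.eventually hsf.eventually_right_inverse,
        hβt.eventually (hgcont.eventually_mem hSmem)] with s hΩs hri hgS
      rw [hΩ] at hΩs
      obtain ⟨q'', hq''S, hq''⟩ := hΩs
      have hqe : q'' = g (β s) := hinj hq''S hgS (by rw [hq'', hri])
      conv_lhs => rw [← hq'']
      rw [ht q'' hq''S, hqe]
    have h1 : HasDerivAt (fun s => g (β s)) (L.symm (N (Φ q'))) s₀ := by
      rw [← hβ0] at hgderiv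
      have := hgderiv.comp_hasDerivAt s₀ hβ'
      rw [hβ0] at this
      exact this
    have h2 : HasDerivAt (fun s => (g (β s)).2) ((L.symm (N (Φ q'))).2) s₀ :=
      ((ContinuousLinearMap.snd ℝ (EuclideanSpace ℝ (Fin m)) ℝ).hasFDerivAt).comp_hasDerivAt
        s₀ h1
    -- compute the value
    have hval : (L.symm (N (Φ q'))).2 = (φ (Φ q'))⁻¹ := by
      have hdet' : detJn Φ q' ≠ 0 := (hdet q' hq').ne'
      set v : EuclideanSpace ℝ (Fin m) × ℝ := L.symm (nv q') with hv
      have hLv : fderiv ℝ Φ q' v = nv q' := by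
        rw [← hcoe]
        exact L.apply_symm_apply _
      have hsum : nv q' = (∑ j, v.1 j • Pd Φ q' j) + v.2 • Pt Φ q' := by
        rw [← hLv, fderiv_apply_decomp]
      have hinner : ‖nv q'‖ ^ 2 = v.2 * detJn Φ q' := by
        have h := congrArg (fun w => ⟪nv q', w⟫_ℝ) hsum
        simp only [inner_add_right, inner_sum, real_inner_smul_right] at h
        rw [real_inner_self_eq_norm_sq] at h
        have hz : ∀ j, ⟪nv q', Pd Φ q' j⟫_ℝ = 0 := by
          intro j
          rw [hnv q' hq' (Pd Φ q' j), detWith_Pd]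
        rw [hnvPt q' hq'] at h
        simp only [hz, mul_zero, Finset.sum_const_zero, zero_add] at h
        exact h
      have hv2 : v.2 = ‖nv q'‖ ^ 2 / detJn Φ q' := by
        field_simp [hdet'] at hinner ⊢
        linarith [hinner]
      rw [hN q' hq', map_smul, Prod.smul_snd, ← hv, smul_eq_mul, hv2, hφ q' hq']
      have hn0 := hnvnorm q' hq'
      field_simp
    rw [hval] at h2
    exact h2.congr_of_eventuallyEq heq
  -- main argument
  intro q hq α hα0 hev
  obtain ⟨V, hVp, hVopen, hV0⟩ := eventually_nhds_iff.mp hev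
  have hqΩ : Φ q ∈ Ω := by rw [hΩ]; exact ⟨q, hq, rfl⟩
  have hφq : 0 < φ (Φ q) := hφpos q hq
  have ht0 : t (α 0) = q.2 := by rw [hα0, ht q hq]
  have hder : ∀ s₀ ∈ V, HasDerivAt (fun s => t (α s)) ((φ (α s₀))⁻¹) s₀ := by
    intro s₀ hs₀
    have hΩs : α s₀ ∈ Ω := (hVp s₀ hs₀).1
    rw [hΩ] at hΩs
    obtain ⟨q', hq', hΦq'⟩ := hΩs
    have hevΩ : ∀ᶠ s in nhds s₀, α s ∈ Ω := by
      filter_upwards [hVopen.eventually_mem hs₀] with s hs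
      exact (hVp s hs).1
    have := key q' hq' α s₀ hΦq'.symm hevΩ ((hVp s₀ hs₀).2)
    rwa [hΦq'] at this
  have hu1 : ∀ s₀ ∈ V, HasDerivAt (fun s => u (t (α s)))
      (deriv u (t (α s₀)) * (φ (α s₀))⁻¹) s₀ := by
    intro s₀ hs₀
    exact ((hu.differentiable two_ne_zero (t (α s₀))).hasDerivAt).comp s₀ (hder s₀ hs₀)
  constructor
  · have := hu1 0 hV0
    rw [ht0, hα0, ← div_eq_mul_inv] at this
    exact this
  · have hevd : deriv (fun s => u (t (α s))) =ᶠ[nhds 0]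
        fun s => deriv u (t (α s)) * (φ (α s))⁻¹ := by
      filter_upwards [hVopen.eventually_mem hV0] with s hs
      exact (hu1 s hs).deriv
    have h2' : ContDiff ℝ ((1 : ℕ) + 1) u := by exact_mod_cast hu
    have hdu : Differentiable ℝ (deriv u) :=
      (contDiff_succ_iff_deriv.mp h2').2.2.differentiable (by simp)
    have h1 : HasDerivAt (fun s => t (α s)) ((φ (Φ q))⁻¹) 0 := by
      have := hder 0 hV0
      rwa [hα0] at this
    have h2 : HasDerivAt (fun s => deriv u (t (α s)))
        (deriv (deriv u) q.2 * (φ (Φ q))⁻¹) 0 := by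
      have hd : HasDerivAt (deriv u) (deriv (deriv u) (t (α 0))) (t (α 0)) :=
        (hdu (t (α 0))).hasDerivAt
      have := hd.comp 0 h1
      rwa [ht0] at this
    have h3 : HasDerivAt (fun s => φ (α s)) (dφds (Φ q)) 0 := hdφds (Φ q) hqΩ α hα0 hev
    have h4 : HasDerivAt (fun s => (φ (α s))⁻¹) (-dφds (Φ q) / φ (α 0) ^ 2) 0 :=
      h3.inv (by rw [hα0]; exact hφq.ne')
    have h5 := h2.mul h4
    have h6 := h5.congr_of_eventuallyEq hevd
    refine h6.congr_deriv ?_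
    rw [ht0, hα0]
    field_simp
    ring
end

section
/- Let U be a critical-point-free harmonic function on a domain Ω ⊆ ℝⁿ and ℓ a unit-speed integral curve of ∇U/‖∇U‖ defined on [0, T] with ℓ(0) = p₀. Then U(ℓ(T)) = U(p₀) + ‖∇U(p₀)‖ · ∫₀ᵀ exp((n−1) I(s)) ds, where I(s) = ∫₀ˢ H(ℓ(ξ)) dξ and H is the mean curvature of the level hypersurfaces of U oriented by ∇U/‖∇U‖. -/
open scoped InnerProductSpace

open Module
lemma cont_ftc {f : ℝ → ℝ} (hf : Continuous f) (a b : ℝ) :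
    HasDerivAt (fun u => ∫ x in a..u, f x) (f b) b :=
  intervalIntegral.integral_hasDerivAt_right (hf.intervalIntegrable a b)
    (hf.stronglyMeasurableAtFilter _ _) hf.continuousAt

lemma sum_inner_eq_trace {m : ℕ} {ι : Type*} [Fintype ι] [DecidableEq ι]
    (o : OrthonormalBasis ι ℝ (EuclideanSpace ℝ (Fin m)))
    (A : EuclideanSpace ℝ (Fin m) →L[ℝ] EuclideanSpace ℝ (Fin m)) :
    ∑ i, ⟪A (o i), o i⟫_ℝ = LinearMap.trace ℝ _ (A : EuclideanSpace ℝ (Fin m) →ₗ[ℝ] _) := by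
  rw [LinearMap.trace_eq_matrix_trace ℝ o.toBasis, Matrix.trace]
  refine Finset.sum_congr rfl fun i _ => ?_
  rw [Matrix.diag_apply, LinearMap.toMatrix_apply, o.coe_toBasis_repr_apply,
    o.repr_apply_apply, real_inner_comm, o.coe_toBasis]
  rfl

lemma key_pointwise_s16 {n : ℕ} (hn : 2 ≤ n) (U : EuclideanSpace ℝ (Fin n) → ℝ)
    (H : EuclideanSpace ℝ (Fin n) → ℝ) (p : EuclideanSpace ℝ (Fin n))
    (hp0 : gradient U p ≠ 0) (hlap : lap U p = 0)
    {v : EuclideanSpace ℝ (Fin n)} (hv : v = ‖gradient U p‖⁻¹ • gradient U p)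
    (hHp : ∀ b : Fin (n - 1) → EuclideanSpace ℝ (Fin n),
      Orthonormal ℝ b → (∀ i, ⟪b i, v⟫_ℝ = 0) →
      H p = (∑ i, -(hessQF U p (b i)) / ‖gradient U p‖) / (n - 1)) :
    ((n : ℝ) - 1) * H p * ‖gradient U p‖ = ⟪fderiv ℝ (gradient U) p v, v⟫_ℝ := by
  classical
  set g : ℝ := ‖gradient U p‖ with hg
  have hgpos : 0 < g := norm_pos_iff.mpr hp0
  have hv1 : ‖v‖ = 1 := by
    rw [hv, norm_smul, norm_inv, norm_norm, inv_mul_cancel₀ hgpos.ne']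
  have hvne : v ≠ 0 := by intro h; rw [h, norm_zero] at hv1; norm_num at hv1
  haveI : Fact (finrank ℝ (EuclideanSpace ℝ (Fin n)) = (n - 1) + 1) :=
    ⟨by rw [finrank_euclideanSpace_fin]; omega⟩
  set b₀ := OrthonormalBasis.fromOrthogonalSpanSingleton (𝕜 := ℝ) (n - 1) hvne
  set b : Fin (n - 1) → EuclideanSpace ℝ (Fin n) := fun i => (b₀ i : EuclideanSpace ℝ (Fin n))
  have hb_on : Orthonormal ℝ b := by
    have := b₀.orthonormal
    rw [orthonormal_iff_ite] at this ⊢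
    intro i j
    simpa [b, Submodule.coe_inner] using this i j
  have hb_tan : ∀ i, ⟪b i, v⟫_ℝ = 0 := fun i =>
    Submodule.mem_orthogonal_singleton_iff_inner_left.mp (b₀ i).2
  set c : Fin (n - 1) ⊕ Unit → EuclideanSpace ℝ (Fin n) := Sum.elim b (fun _ => v)
  have hc_on : Orthonormal ℝ c := by
    rw [orthonormal_iff_ite]
    rintro (i | i) (j | j)
    · simpa [c] using (orthonormal_iff_ite.mp hb_on) i j
    · show ⟪b i, v⟫_ℝ = _
      rw [if_neg (by simp)]; exact hb_tan i
    · show ⟪v, b j⟫_ℝ = _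
      rw [if_neg (by simp), real_inner_comm]; exact hb_tan j
    · show ⟪v, v⟫_ℝ = _
      rw [if_pos rfl, real_inner_self_eq_norm_sq, hv1]; norm_num
  have hcard : Fintype.card (Fin (n - 1) ⊕ Unit) = finrank ℝ (EuclideanSpace ℝ (Fin n)) := by
    simp [finrank_euclideanSpace_fin]; omega
  set cb := basisOfOrthonormalOfCardEqFinrank hc_on hcard
  have hcb : ⇑cb = c := coe_basisOfOrthonormalOfCardEqFinrank hc_on hcard
  set ob := cb.toOrthonormalBasis (by rwa [hcb])
  have hob : ⇑ob = c := by rw [Basis.coe_toOrthonormalBasis, hcb]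
  set A := fderiv ℝ (gradient U) p
  have htr : ∑ i, ⟪A (ob i), ob i⟫_ℝ =
      ∑ i, ⟪A ((EuclideanSpace.basisFun (Fin n) ℝ) i), (EuclideanSpace.basisFun (Fin n) ℝ) i⟫_ℝ := by
    rw [sum_inner_eq_trace, sum_inner_eq_trace]
  have hlap' : ∑ i, ⟪A (ob i), ob i⟫_ℝ = 0 := by
    rw [htr]
    have : ∀ i : Fin n, (EuclideanSpace.basisFun (Fin n) ℝ) i = EuclideanSpace.single i (1:ℝ) :=
      fun i => EuclideanSpace.basisFun_apply (ι := Fin n) (𝕜 := ℝ) i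
    simp only [this]
    exact hlap
  have hsum : ∑ i, ⟪A (b i), b i⟫_ℝ + ⟪A v, v⟫_ℝ = 0 := by
    rw [← hlap', hob]
    rw [Fintype.sum_sum_type]
    simp [c]
  have hHval := hHp b hb_on hb_tan
  have hsum2 : ∑ i, -(hessQF U p (b i)) / g = ⟪A v, v⟫_ℝ / g := by
    have : ∑ i, -(hessQF U p (b i)) = ⟪A v, v⟫_ℝ := by
      simp only [hessQF, Finset.sum_neg_distrib]
      linarith [hsum]
    rw [← this, ← Finset.sum_div]
  have hn1 : (0:ℝ) < (n:ℝ) - 1 := by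
    have : (2:ℝ) ≤ (n:ℝ) := by exact_mod_cast hn
    linarith
  rw [hHval, hsum2]
  field_simp



theorem stmt16 {n : ℕ} (hn : 2 ≤ n)
    {Ω : Set (EuclideanSpace ℝ (Fin n))} (hΩ : IsOpen Ω)
    (U : EuclideanSpace ℝ (Fin n) → ℝ) (hU : ContDiffOn ℝ 2 U Ω)
    (hgrad : ∀ p ∈ Ω, gradient U p ≠ 0)
    (hharm : ∀ p ∈ Ω, lap U p = 0)
    (N : EuclideanSpace ℝ (Fin n) → EuclideanSpace ℝ (Fin n))
    (hN : ∀ p ∈ Ω, N p = ‖gradient U p‖⁻¹ • gradient U p)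
    (H : EuclideanSpace ℝ (Fin n) → ℝ)
    -- H(p) is the mean curvature of the level set {U = U(p)} at p: the average over
    -- unit tangent vectors v of −D²_v U(p)/‖∇U(p)‖
    (hH : ∀ p ∈ Ω, ∀ b : Fin (n - 1) → EuclideanSpace ℝ (Fin n),
      Orthonormal ℝ b → (∀ i, ⟪b i, N p⟫_ℝ = 0) →
      H p = (∑ i, -(hessQF U p (b i)) / ‖gradient U p‖) / (n - 1))
    (T : ℝ) (hT : 0 < T)
    (ℓ : ℝ → EuclideanSpace ℝ (Fin n))
    (hℓ : ∀ s ∈ Set.Icc 0 T, ℓ s ∈ Ω ∧ HasDerivAt ℓ (N (ℓ s)) s) :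
    U (ℓ T) = U (ℓ 0) + ‖gradient U (ℓ 0)‖ *
      ∫ s in (0:ℝ)..T, Real.exp ((n - 1) * ∫ ξ in (0:ℝ)..s, H (ℓ ξ)) := by
  have hgradU : gradient U = fun x =>
      (InnerProductSpace.toDual ℝ (EuclideanSpace ℝ (Fin n))).symm (fderiv ℝ U x) := rfl
  -- gradient is C¹ on Ω
  have hG1 : ContDiffOn ℝ 1 (gradient U) Ω := by
    rw [hgradU]
    exact ((InnerProductSpace.toDual ℝ (EuclideanSpace ℝ (Fin n))).symm.contDiff).comp_contDiffOn
      (hU.fderiv_of_isOpen hΩ (by norm_num))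
  have hGdiff : ∀ p ∈ Ω, DifferentiableAt ℝ (gradient U) p := fun p hp =>
    (hG1.contDiffAt (hΩ.mem_nhds hp)).differentiableAt one_ne_zero
  have hAcont : ContinuousOn (fun p => fderiv ℝ (gradient U) p) Ω :=
    hG1.continuousOn_fderiv_of_isOpen hΩ le_rfl
  have hUdiff : ∀ p ∈ Ω, DifferentiableAt ℝ U p := fun p hp =>
    (hU.contDiffAt (hΩ.mem_nhds hp)).differentiableAt (by norm_num)
  have hfd_inner : ∀ p, ∀ w, fderiv ℝ U p w = ⟪gradient U p, w⟫_ℝ := by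
    intro p w
    rw [hgradU]
    exact (InnerProductSpace.toDual_symm_apply).symm
  -- notation
  set Γ : ℝ → EuclideanSpace ℝ (Fin n) := fun s => gradient U (ℓ s) with hΓ
  set g : ℝ → ℝ := fun s => ‖Γ s‖ with hgdef
  set A : ℝ → (EuclideanSpace ℝ (Fin n) →L[ℝ] EuclideanSpace ℝ (Fin n)) :=
    fun s => fderiv ℝ (gradient U) (ℓ s) with hA
  set h : ℝ → ℝ := fun s => ⟪A s (N (ℓ s)), N (ℓ s)⟫_ℝ with hh
  have hmem : ∀ s ∈ Set.Icc (0:ℝ) T, ℓ s ∈ Ω := fun s hs => (hℓ s hs).1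
  have hgpos : ∀ s ∈ Set.Icc (0:ℝ) T, 0 < g s := fun s hs =>
    norm_pos_iff.mpr (hgrad _ (hmem s hs))
  have hNs : ∀ s ∈ Set.Icc (0:ℝ) T, N (ℓ s) = (g s)⁻¹ • Γ s := fun s hs => hN _ (hmem s hs)
  have hℓcont : ContinuousOn ℓ (Set.Icc 0 T) := fun s hs =>
    ((hℓ s hs).2.continuousAt).continuousWithinAt
  -- derivative of U ∘ ℓ
  have hφder : ∀ s ∈ Set.Icc (0:ℝ) T, HasDerivAt (fun t => U (ℓ t)) (g s) s := by
    intro s hs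
    have h1 := (hUdiff _ (hmem s hs)).hasFDerivAt.comp_hasDerivAt s (hℓ s hs).2
    have h2 : fderiv ℝ U (ℓ s) (N (ℓ s)) = g s := by
      rw [hfd_inner, hNs s hs, real_inner_smul_right, real_inner_self_eq_norm_sq]
      have := (hgpos s hs).ne'
      field_simp [hgdef]
      ring
    rwa [h2] at h1
  -- derivative of Γ
  have hΓder : ∀ s ∈ Set.Icc (0:ℝ) T, HasDerivAt Γ (A s (N (ℓ s))) s := fun s hs =>
    (hGdiff _ (hmem s hs)).hasFDerivAt.comp_hasDerivAt s (hℓ s hs).2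
  -- derivative of g
  have hgder : ∀ s ∈ Set.Icc (0:ℝ) T, HasDerivAt g (h s) s := by
    intro s hs
    have hq : HasDerivAt (fun t => ⟪Γ t, Γ t⟫_ℝ)
        (⟪Γ s, A s (N (ℓ s))⟫_ℝ + ⟪A s (N (ℓ s)), Γ s⟫_ℝ) s :=
      (hΓder s hs).inner ℝ (hΓder s hs)
    have hqne : ⟪Γ s, Γ s⟫_ℝ ≠ 0 := by
      rw [real_inner_self_eq_norm_sq]
      exact pow_ne_zero 2 (norm_ne_zero_iff.mpr (hgrad _ (hmem s hs)))
    have hsq := (Real.hasDerivAt_sqrt hqne).comp s hq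
    have hgeq : g = fun t => Real.sqrt ⟪Γ t, Γ t⟫_ℝ := by
      funext t
      rw [hgdef, real_inner_self_eq_norm_sq, Real.sqrt_sq (norm_nonneg _)]
    rw [hgeq]
    refine hsq.congr_deriv (Eq.symm ?_)
    have hsqrt : Real.sqrt ⟪Γ s, Γ s⟫_ℝ = g s := by
      rw [real_inner_self_eq_norm_sq, Real.sqrt_sq (norm_nonneg _)]
    rw [hsqrt, hh]
    simp only
    rw [hNs s hs]
    simp only [map_smul, real_inner_smul_left, real_inner_smul_right]
    rw [real_inner_comm (Γ s) (A s (Γ s))]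
    have hgne := (hgpos s hs).ne'
    set X := ⟪A s (Γ s), Γ s⟫_ℝ with hX
    field_simp
    ring
  -- continuity of h on Icc
  have hhcont : ContinuousOn h (Set.Icc (0:ℝ) T) := by
    have hΓcont : ContinuousOn Γ (Set.Icc (0:ℝ) T) :=
      (hG1.continuousOn).comp hℓcont hmem
    have hgcont : ContinuousOn g (Set.Icc (0:ℝ) T) := hΓcont.norm
    have hNcont : ContinuousOn (fun s => (g s)⁻¹ • Γ s) (Set.Icc (0:ℝ) T) :=
      (hgcont.inv₀ (fun s hs => (hgpos s hs).ne')).smul hΓcont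
    have hAcont' : ContinuousOn A (Set.Icc (0:ℝ) T) := hAcont.comp hℓcont hmem
    have : ContinuousOn (fun s => ⟪A s ((g s)⁻¹ • Γ s), (g s)⁻¹ • Γ s⟫_ℝ)
        (Set.Icc (0:ℝ) T) := (hAcont'.clm_apply hNcont).inner hNcont
    exact this.congr fun s hs => by rw [hh]; simp only; rw [hNs s hs]
  have hgcont : ContinuousOn g (Set.Icc (0:ℝ) T) :=
    ((hG1.continuousOn).comp hℓcont hmem).norm
  -- curvature identity
  have hcurv : ∀ s ∈ Set.Icc (0:ℝ) T, h s = ((n:ℝ) - 1) * H (ℓ s) * g s := by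
    intro s hs
    exact (key_pointwise_s16 hn U H (ℓ s) (hgrad _ (hmem s hs)) (hharm _ (hmem s hs))
      (hN _ (hmem s hs)) (fun b hb hbt => hH _ (hmem s hs) b hb hbt)).symm
  -- clamped r
  set r : ℝ → ℝ := fun s => h s / g s with hr
  have hrcont : ContinuousOn r (Set.Icc (0:ℝ) T) :=
    hhcont.div hgcont fun s hs => (hgpos s hs).ne'
  set c : ℝ → ℝ := fun s => max 0 (min s T) with hc
  have hccont : Continuous c := continuous_const.max (continuous_id.min continuous_const)
  have hcmem : ∀ s, c s ∈ Set.Icc (0:ℝ) T :=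
    fun s => ⟨le_max_left _ _, max_le (le_min (le_refl 0) hT.le |>.trans (min_le_right _ _)) (min_le_right _ _)⟩
  have hceq : ∀ s ∈ Set.Icc (0:ℝ) T, c s = s := fun s hs => by
    rw [hc]; simp only; rw [min_eq_left hs.2, max_eq_right hs.1]
  set rt : ℝ → ℝ := fun s => r (c s) with hrt
  have hrtcont : Continuous rt := hrcont.comp_continuous hccont hcmem
  have hrteq : ∀ s ∈ Set.Icc (0:ℝ) T, rt s = r s := fun s hs => by rw [hrt]; simp only [hceq s hs]
  set I : ℝ → ℝ := fun s => ∫ ξ in (0:ℝ)..s, rt ξ with hI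
  have hIder : ∀ s, HasDerivAt I (rt s) s := fun s => cont_ftc hrtcont 0 s
  have hIcont : Continuous I := by
    rw [continuous_iff_continuousAt]; exact fun s => (hIder s).continuousAt
  -- F = g * exp(-I) is constant
  set F : ℝ → ℝ := fun s => g s * Real.exp (-(I s)) with hF
  have hFder : ∀ s ∈ Set.Icc (0:ℝ) T, HasDerivAt F 0 s := by
    intro s hs
    have he : HasDerivAt (fun t => Real.exp (-(I t))) (Real.exp (-(I s)) * (-(rt s))) s :=
      ((hIder s).neg).exp
    have := (hgder s hs).mul he
    refine this.congr_deriv (Eq.symm ?_)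
    rw [hrteq s hs, hr]
    have hgne := (hgpos s hs).ne'
    field_simp
    ring
  have hFcont : ContinuousOn F (Set.Icc (0:ℝ) T) := fun s hs =>
    ((hFder s hs).continuousAt).continuousWithinAt
  have hFconst : ∀ s ∈ Set.Icc (0:ℝ) T, F s = F 0 :=
    constant_of_has_deriv_right_zero hFcont
      (fun x hx => ((hFder x (Set.Ico_subset_Icc_self hx)).hasDerivWithinAt))
  have hI0 : I 0 = 0 := intervalIntegral.integral_same
  have hgval : ∀ s ∈ Set.Icc (0:ℝ) T, g s = g 0 * Real.exp (I s) := by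
    intro s hs
    have hFs : g s * Real.exp (-(I s)) = g 0 * Real.exp (-(I 0)) := hFconst s hs
    rw [hI0, neg_zero, Real.exp_zero, mul_one] at hFs
    calc g s = g s * Real.exp (-(I s)) * Real.exp (I s) := by
          rw [mul_assoc, ← Real.exp_add]; simp
      _ = g 0 * Real.exp (I s) := by rw [hFs]
  -- second constancy
  set Ψ : ℝ → ℝ := fun s => U (ℓ s) - g 0 * ∫ ξ in (0:ℝ)..s, Real.exp (I ξ) with hΨ
  have hexpcont : Continuous (fun ξ => Real.exp (I ξ)) := Real.continuous_exp.comp hIcont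
  have hΨder : ∀ s ∈ Set.Icc (0:ℝ) T, HasDerivAt Ψ 0 s := by
    intro s hs
    have h1 := hφder s hs
    have h2 : HasDerivAt (fun t => g 0 * ∫ ξ in (0:ℝ)..t, Real.exp (I ξ))
        (g 0 * Real.exp (I s)) s := (cont_ftc hexpcont 0 s).const_mul (g 0)
    have := h1.sub h2
    rwa [hgval s hs, sub_self] at this
  have hΨcont : ContinuousOn Ψ (Set.Icc (0:ℝ) T) := fun s hs =>
    ((hΨder s hs).continuousAt).continuousWithinAt
  have hΨconst := constant_of_has_deriv_right_zero hΨcont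
    (fun x hx => ((hΨder x (Set.Ico_subset_Icc_self hx)).hasDerivWithinAt))
  have hmain := hΨconst T (Set.right_mem_Icc.mpr hT.le)
  rw [hΨ] at hmain
  simp only [intervalIntegral.integral_same, mul_zero, sub_zero] at hmain
  -- identify the integrals
  have hIeq : ∀ s ∈ Set.Icc (0:ℝ) T, I s = ((n:ℝ) - 1) * ∫ ξ in (0:ℝ)..s, H (ℓ ξ) := by
    intro s hs
    rw [hI]
    simp only
    rw [← intervalIntegral.integral_const_mul]
    apply intervalIntegral.integral_congr
    intro ξ hξ
    have hξ' : ξ ∈ Set.Icc (0:ℝ) T := by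
      rw [Set.uIcc_of_le hs.1] at hξ
      exact ⟨hξ.1, hξ.2.trans hs.2⟩
    rw [hrteq ξ hξ', hr]
    simp only
    rw [hcurv ξ hξ']
    field_simp [(hgpos ξ hξ').ne']
  have hintint : (∫ s in (0:ℝ)..T, Real.exp (I s)) =
      ∫ s in (0:ℝ)..T, Real.exp (((n:ℝ) - 1) * ∫ ξ in (0:ℝ)..s, H (ℓ ξ)) := by
    apply intervalIntegral.integral_congr
    intro s hs
    simp only
    rw [Set.uIcc_of_le hT.le] at hs
    rw [hIeq s hs]
  have hg0 : g 0 = ‖gradient U (ℓ 0)‖ := rfl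
  rw [← hintint, ← hg0]
  linarith [hmain]
end
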